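/- (1-dimensional algebraic Poincaré lemma, part 2) With A = k[u₀, u₁, …], ∂ the total derivative (∂u_j = u_{j+1}), and E the Euler operator E(f) = Σ_j (−1)^j ∂^j(∂f/∂u_j): if E(f) = 0 then f = c + ∂(g) for some constant c ∈ k and some g ∈ A. Hence ker E = k ⊕ ∂(A). -/

import Mathlib

/-- The total derivative `∂` on `A = k[u₀,u₁,u₂,…]`: the unique derivation with
`∂ u_j = u_{j+1}`. -/
noncomputable def totalDer (k : Type*) [CommRing k] :
    Derivation k (MvPolynomial ℕ k) (MvPolynomial ℕ k) :=
  MvPolynomial.mkDerivation k fun j => MvPolynomial.X (j + 1)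

/-- The Euler operator `E f = ∑_{j≥0} (−1)^j ∂^j (∂f/∂u_j)`. -/
noncomputable def eulerOp (k : Type*) [CommRing k] (f : MvPolynomial ℕ k) :
    MvPolynomial ℕ k :=
  ∑ᶠ j : ℕ, ((-1 : ℤ) ^ j) • ((fun g => totalDer k g)^[j] (MvPolynomial.pderiv j f))

namespace AuxPL

open MvPolynomial

variable {k : Type*} [CommRing k]

local notation "A" => MvPolynomial ℕ k

/-- The counting operator `N f = ∑ u_j ∂f/∂u_j`, as a derivation. -/
noncomputable def NN (k : Type*) [CommRing k] : Derivation k (MvPolynomial ℕ k) (MvPolynomial ℕ k) :=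
  MvPolynomial.mkDerivation k fun j => MvPolynomial.X j

lemma totalDer_X (i : ℕ) : totalDer k (X i) = X (i+1) := by
  simp [totalDer]

lemma iterD_zero (j : ℕ) : (fun g => totalDer k g)^[j] (0 : A) = 0 :=
  Function.iterate_fixed (by simp) j

lemma iterD_X (j i : ℕ) : (fun g => totalDer k g)^[j] (X i : A) = X (i + j) := by
  induction j with
  | zero => simp
  | succ n ih =>
      rw [Function.iterate_succ_apply', ih, totalDer_X]
      congr 1

/-- Integration by parts. -/
lemma ibp (j : ℕ) (a g : A) :
    ∃ h : A, a * (fun g => totalDer k g)^[j] g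
      = (-1:k)^j • ((fun g => totalDer k g)^[j] a * g) + totalDer k h := by
  induction j generalizing g with
  | zero => exact ⟨0, by simp⟩
  | succ n ih =>
      obtain ⟨h₁, ih₁⟩ := ih (totalDer k g)
      refine ⟨(-1:k)^n • ((fun g => totalDer k g)^[n] a * g) + h₁, ?_⟩
      rw [Function.iterate_succ_apply, ih₁, map_add, Derivation.map_smul,
        Derivation.leibniz, Function.iterate_succ_apply']
      simp only [smul_eq_mul, MvPolynomial.smul_eq_C_mul, pow_succ, map_mul, map_neg, map_one,
        map_pow]
      ring

lemma degree_add' (a b : ℕ →₀ ℕ) : (a + b).degree = a.degree + b.degree := by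
  simp [Finsupp.degree_eq_weight_one, map_add]

lemma degree_single' (i : ℕ) : (Finsupp.single i 1).degree = 1 := by
  simp [Finsupp.degree_apply, Finsupp.support_single_ne_zero i one_ne_zero]

lemma NN_monomial (α : ℕ →₀ ℕ) (c : k) :
    NN k (monomial α c) = α.degree • monomial α c := by
  classical
  rw [NN, mkDerivation_monomial, Finsupp.sum]
  have h : ∀ i ∈ α.support,
      (monomial (α - Finsupp.single i 1) ((α i : k))) • (X i : A)
        = monomial α (α i : k) := by
    intro i hi
    rw [smul_eq_mul, X, monomial_mul, mul_one, tsub_add_cancel_of_le]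
    exact Finsupp.single_le_iff.mpr (Nat.one_le_iff_ne_zero.mpr (Finsupp.mem_support_iff.mp hi))
  rw [Finset.sum_congr rfl h, ← map_sum (monomial α) _ α.support, ← Nat.cast_sum]
  rw [← Nat.cast_smul_eq_nsmul k, smul_monomial, smul_monomial]
  congr 1
  simp [smul_eq_mul, mul_comm]
  rw [Finsupp.degree_apply, Nat.cast_sum]

lemma degree_eq_of_mem_support {p : A} {d : ℕ} (hp : p.IsHomogeneous d) {α : ℕ →₀ ℕ}
    (hα : α ∈ p.support) : α.degree = d := by
  rw [Finsupp.degree_eq_weight_one]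
  exact hp (mem_support_iff.mp hα)

lemma NN_isHomogeneous {p : A} {d : ℕ} (hp : p.IsHomogeneous d) : NN k p = d • p := by
  conv_lhs => rw [p.as_sum]
  conv_rhs => rw [p.as_sum]
  rw [map_sum, Finset.smul_sum]
  refine Finset.sum_congr rfl fun α hα => ?_
  rw [NN_monomial, degree_eq_of_mem_support hp hα]

lemma totalDer_isHomogeneous {p : A} {d : ℕ} (hp : p.IsHomogeneous d) :
    (totalDer k p).IsHomogeneous d := by
  classical
  conv => rw [p.as_sum]
  rw [map_sum]
  apply IsHomogeneous.sum
  intro α hα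
  rw [totalDer, mkDerivation_monomial]
  rw [← mem_homogeneousSubmodule]
  apply Submodule.smul_mem
  rw [mem_homogeneousSubmodule, Finsupp.sum]
  apply IsHomogeneous.sum
  intro i hi
  have hle : Finsupp.single i 1 ≤ α :=
    Finsupp.single_le_iff.mpr (Nat.one_le_iff_ne_zero.mpr (Finsupp.mem_support_iff.mp hi))
  have hdeg : (α - Finsupp.single i 1).degree + 1 = d := by
    have h1 : α - Finsupp.single i 1 + Finsupp.single i 1 = α := tsub_add_cancel_of_le hle
    have h2 := degree_add' (α - Finsupp.single i 1) (Finsupp.single i 1)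
    rw [h1, degree_single'] at h2
    rw [← degree_eq_of_mem_support hp hα, h2]
  rw [smul_eq_mul, ← hdeg]
  exact (isHomogeneous_monomial _ rfl).mul (isHomogeneous_X _ _)

lemma hcD (d : ℕ) (g : A) :
    homogeneousComponent d (totalDer k g) = totalDer k (homogeneousComponent d g) := by
  classical
  conv_lhs => rw [← g.sum_homogeneousComponent]
  rw [map_sum, map_sum]
  have h : ∀ e ∈ Finset.range (g.totalDegree + 1),
      homogeneousComponent d (totalDer k (homogeneousComponent e g))
        = if d = e then totalDer k (homogeneousComponent e g) else 0 :=
    fun e _ => homogeneousComponent_of_mem (totalDer_isHomogeneous (homogeneousComponent_isHomogeneous e g))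
  rw [Finset.sum_congr rfl h, Finset.sum_ite_eq]
  split
  · rfl
  · next hmem =>
      rw [homogeneousComponent_eq_zero, map_zero]
      have := Finset.mem_range.not.mp hmem
      omega

lemma hcN (d : ℕ) (g : A) :
    homogeneousComponent d (NN k g) = d • homogeneousComponent d g := by
  classical
  conv_lhs => rw [← g.sum_homogeneousComponent]
  rw [map_sum, map_sum]
  have h : ∀ e ∈ Finset.range (g.totalDegree + 1),
      homogeneousComponent d (NN k (homogeneousComponent e g))
        = if d = e then e • homogeneousComponent e g else 0 := by
    intro e _
    rw [NN_isHomogeneous (homogeneousComponent_isHomogeneous e g), map_nsmul,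
      homogeneousComponent_of_mem (homogeneousComponent_isHomogeneous e g)]
    split <;> simp
  rw [Finset.sum_congr rfl h, Finset.sum_ite_eq]
  split
  · rfl
  · next hmem =>
      rw [homogeneousComponent_eq_zero, smul_zero]
      have := Finset.mem_range.not.mp hmem
      omega

lemma der_sum_apply {ι : Type*} (s : Finset ι) (D : ι → Derivation k A A) (x : A) :
    (∑ j ∈ s, D j) x = ∑ j ∈ s, D j x := by
  classical
  induction s using Finset.induction with
  | empty => simp
  | insert _ _ hni ih => rw [Finset.sum_insert hni, Finset.sum_insert hni, Derivation.add_apply, ih]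

lemma NN_eq_sum (f : A) : NN k f = ∑ j ∈ f.vars, X j * pderiv j f := by
  classical
  have hD : NN k f = (∑ j ∈ f.vars, (X j : A) • pderiv j : Derivation k A A) f := by
    apply derivation_eq_of_forall_mem_vars
    intro i hi
    rw [NN, mkDerivation_X, der_sum_apply, Finset.sum_eq_single i]
    · simp
    · intro j hj hne
      simp [pderiv_X_of_ne (Ne.symm hne)]
    · intro h
      exact absurd hi h
  rw [hD, der_sum_apply]
  exact Finset.sum_congr rfl fun j _ => rfl

lemma euler_sum (f : A) :
    eulerOp k f = ∑ j ∈ f.vars, ((-1:k) ^ j) • ((fun g => totalDer k g)^[j] (pderiv j f)) := by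
  rw [eulerOp, finsum_eq_sum_of_support_subset _ (s := f.vars)]
  · refine Finset.sum_congr rfl fun j _ => ?_
    rw [← Int.cast_smul_eq_zsmul k]
    push_cast
    rfl
  · intro j hj
    simp only [Function.mem_support, ne_eq] at hj
    by_contra hvars
    apply hj
    rw [pderiv_eq_zero_of_notMem_vars hvars, iterD_zero, smul_zero]

end AuxPL

/-- 1-dimensional algebraic Poincaré lemma, part 2: in characteristic 0, if `E f = 0` then
`f = c + ∂ g` for some constant `c ∈ k` and some polynomial `g`; hence
`ker E = k ⊕ ∂(A)`. -/
theorem stmt_11 (k : Type*) [Field k] [CharZero k] (f : MvPolynomial ℕ k)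
    (hf : eulerOp k f = 0) :
    ∃ (c : k) (g : MvPolynomial ℕ k), f = MvPolynomial.C c + totalDer k g := by
  classical
  open MvPolynomial AuxPL in
  choose H hH using fun j => AuxPL.ibp j (X 0 : MvPolynomial ℕ k) (pderiv j f)
  have key : ∀ j : ℕ, (X 0 : MvPolynomial ℕ k) * ((-1:k)^j • (fun g => totalDer k g)^[j] (pderiv j f))
      = X j * pderiv j f + totalDer k ((-1:k)^j • H j) := by
    intro j
    rw [mul_smul_comm, hH j, AuxPL.iterD_X, smul_add, smul_smul, ← pow_add,
      Even.neg_one_pow ⟨j, rfl⟩, one_smul, Derivation.map_smul, Nat.zero_add]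
  have hsum : AuxPL.NN k f + totalDer k (∑ j ∈ f.vars, (-1:k)^j • H j) = 0 := by
    have h1 : ∑ j ∈ f.vars, ((X j : MvPolynomial ℕ k) * pderiv j f + totalDer k ((-1:k)^j • H j))
        = X 0 * eulerOp k f := by
      rw [AuxPL.euler_sum, Finset.mul_sum]
      exact Finset.sum_congr rfl fun j _ => (key j).symm
    rw [Finset.sum_add_distrib] at h1
    rw [AuxPL.NN_eq_sum, map_sum, h1, hf, mul_zero]
  set G : MvPolynomial ℕ k := -(∑ j ∈ f.vars, (-1:k)^j • H j) with hG
  have hNf : AuxPL.NN k f = totalDer k G := by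
    rw [hG, map_neg, eq_neg_iff_add_eq_zero]
    exact hsum
  have comp : ∀ d : ℕ, d • homogeneousComponent d f
      = totalDer k (homogeneousComponent d G) := by
    intro d
    rw [← AuxPL.hcN, hNf, AuxPL.hcD]
  refine ⟨coeff 0 f,
    ∑ d ∈ (Finset.range (f.totalDegree + 1)).erase 0, ((d:k)⁻¹) • homogeneousComponent d G, ?_⟩
  have h0mem : 0 ∈ Finset.range (f.totalDegree + 1) := by simp
  have hsplit : f = homogeneousComponent 0 f
      + ∑ d ∈ (Finset.range (f.totalDegree + 1)).erase 0, homogeneousComponent d f := by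
    conv_lhs => rw [← f.sum_homogeneousComponent]
    rw [← Finset.add_sum_erase _ _ h0mem]
  conv_lhs => rw [hsplit, homogeneousComponent_zero]
  rw [map_sum]
  congr 1
  refine Finset.sum_congr rfl fun d hd => ?_
  have hd0 : d ≠ 0 := (Finset.mem_erase.mp hd).1
  rw [Derivation.map_smul, ← comp d, ← Nat.cast_smul_eq_nsmul k, smul_smul,
    inv_mul_cancel₀ (Nat.cast_ne_zero.mpr hd0), one_smul]
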